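/- Let ℓ, d_Q, d_V be positive integers, let M be a fixed real ℓ×ℓ mask matrix, and define functional attention F(q, k, v) = softmax((1/d_Q)·q·kᵀ + M)·v for q, k ∈ ℝ^{ℓ×d_Q} and v ∈ ℝ^{ℓ×d_V}, where softmax acts row-wise: softmax(z)_{im} = exp(z_{im}) / Σ_m' exp(z_{im'}). Then F is differentiable, and for every (q, k, v) and every perturbation (Δq, Δk, Δv), the Fréchet derivative satisfies ‖∇F(q,k,v)·(Δq, Δk, Δv)‖_{∞RMS} ≤ max(1, ‖v‖_{∞RMS}·max(‖q‖_{∞RMS}, ‖k‖_{∞RMS}))·(‖Δq‖_{∞RMS} + ‖Δk‖_{∞RMS} + ‖Δv‖_{∞RMS}). That is, functional attention with 1/d_Q scaling has Lipschitz bound max(1, ‖v‖·max(‖q‖, ‖k‖)) at (q, k, v). -/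

import Mathlib

open Matrix

attribute [local instance] Matrix.normedAddCommGroup Matrix.normedSpace

/-- The `∞RMS` norm of `x ∈ ℝ^{ℓ×d}`: the maximum over rows (token positions)
of the RMS norm `sqrt((1/d)·Σ_j x_{ij}²)` of the corresponding row. -/
noncomputable def infRMS {l d : ℕ} (x : Matrix (Fin l) (Fin d) ℝ) : ℝ :=
  ⨆ i : Fin l, Real.sqrt ((1 / (d : ℝ)) * ∑ j, x i j ^ 2)

/-- Row-wise softmax: `softmax(z)_{im} = exp(z_{im}) / Σ_{m'} exp(z_{im'})`. -/
noncomputable def softmaxRows {l m : ℕ} (z : Matrix (Fin l) (Fin m) ℝ) :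
    Matrix (Fin l) (Fin m) ℝ :=
  Matrix.of fun i j => Real.exp (z i j) / ∑ j', Real.exp (z i j')

/-- Functional attention with `1/d_Q` scaling:
`F(q, k, v) = softmax((1/d_Q)·q·kᵀ + M)·v`. -/
noncomputable def attnF {l dQ dV : ℕ} (M : Matrix (Fin l) (Fin l) ℝ)
    (qkv : Matrix (Fin l) (Fin dQ) ℝ × Matrix (Fin l) (Fin dQ) ℝ ×
      Matrix (Fin l) (Fin dV) ℝ) : Matrix (Fin l) (Fin dV) ℝ :=
  softmaxRows ((1 / (dQ : ℝ)) • (qkv.1 * qkv.2.1ᵀ) + M) * qkv.2.2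

/-! ### Auxiliary lemmas -/

lemma sqrt_cs {d : ℕ} (a b : Fin d → ℝ) :
    |∑ s, a s * b s| ≤ Real.sqrt (∑ s, a s ^ 2) * Real.sqrt (∑ s, b s ^ 2) := by
  calc |∑ s, a s * b s| = Real.sqrt ((∑ s, a s * b s) ^ 2) := by
        rw [Real.sqrt_sq_eq_abs]
    _ ≤ Real.sqrt ((∑ s, a s ^ 2) * ∑ s, b s ^ 2) :=
        Real.sqrt_le_sqrt (Finset.sum_mul_sq_le_sq_mul_sq _ _ _)
    _ = _ := Real.sqrt_mul (by positivity) _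

lemma cs_rms {d : ℕ} (a b : Fin d → ℝ) :
    (1 / (d : ℝ)) * |∑ s, a s * b s| ≤
      Real.sqrt ((1 / (d : ℝ)) * ∑ s, a s ^ 2) * Real.sqrt ((1 / (d : ℝ)) * ∑ s, b s ^ 2) := by
  have h0 : (0:ℝ) ≤ 1 / (d : ℝ) := by positivity
  rw [Real.sqrt_mul h0, Real.sqrt_mul h0]
  calc (1 / (d : ℝ)) * |∑ s, a s * b s|
      = (Real.sqrt (1/(d:ℝ)) * Real.sqrt (1/(d:ℝ))) * |∑ s, a s * b s| := by
        rw [Real.mul_self_sqrt h0]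
    _ ≤ (Real.sqrt (1/(d:ℝ)) * Real.sqrt (1/(d:ℝ))) *
        (Real.sqrt (∑ s, a s ^ 2) * Real.sqrt (∑ s, b s ^ 2)) := by
        apply mul_le_mul_of_nonneg_left (sqrt_cs a b) (by positivity)
    _ = _ := by ring

/-- Minkowski for two, with the `1/d` factor. -/
lemma rms_add {d : ℕ} (f g : Fin d → ℝ) :
    Real.sqrt ((1/(d:ℝ)) * ∑ j, (f j + g j) ^ 2) ≤
      Real.sqrt ((1/(d:ℝ)) * ∑ j, f j ^ 2) + Real.sqrt ((1/(d:ℝ)) * ∑ j, g j ^ 2) := by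
  have h0 : (0:ℝ) ≤ 1 / (d : ℝ) := by positivity
  rw [Real.sqrt_mul h0, Real.sqrt_mul h0, Real.sqrt_mul h0, ← mul_add]
  apply mul_le_mul_of_nonneg_left _ (Real.sqrt_nonneg _)
  have hfg : ∑ j, (f j + g j) ^ 2 ≤
      (Real.sqrt (∑ j, f j ^ 2) + Real.sqrt (∑ j, g j ^ 2)) ^ 2 := by
    have hF : Real.sqrt (∑ j, f j ^ 2) ^ 2 = ∑ j, f j ^ 2 := Real.sq_sqrt (by positivity)
    have hG : Real.sqrt (∑ j, g j ^ 2) ^ 2 = ∑ j, g j ^ 2 := Real.sq_sqrt (by positivity)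
    have h2 : ∑ j, f j * g j ≤ Real.sqrt (∑ j, f j ^ 2) * Real.sqrt (∑ j, g j ^ 2) :=
      (le_abs_self _).trans (sqrt_cs f g)
    have hexp : ∑ j, (f j + g j) ^ 2
        = ∑ j, f j ^ 2 + 2 * ∑ j, f j * g j + ∑ j, g j ^ 2 := by
      rw [Finset.mul_sum, ← Finset.sum_add_distrib, ← Finset.sum_add_distrib]
      exact Finset.sum_congr rfl fun j _ => by ring
    nlinarith [hexp]
  calc Real.sqrt (∑ j, (f j + g j) ^ 2) ≤
      Real.sqrt ((Real.sqrt (∑ j, f j ^ 2) + Real.sqrt (∑ j, g j ^ 2)) ^ 2) :=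
        Real.sqrt_le_sqrt hfg
    _ = _ := Real.sqrt_sq (by positivity)

/-- RMS of a linear combination of rows. -/
lemma rms_lin {d n : ℕ} (c : Fin n → ℝ) (w : Fin n → Fin d → ℝ) (T : Finset (Fin n)) :
    Real.sqrt ((1/(d:ℝ)) * ∑ j, (∑ m ∈ T, c m * w m j) ^ 2) ≤
      ∑ m ∈ T, |c m| * Real.sqrt ((1/(d:ℝ)) * ∑ j, w m j ^ 2) := by
  induction T using Finset.induction with
  | empty => simp
  | insert _ _ hm ih =>
    rename_i a T'
    simp only [Finset.sum_insert hm]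
    have h : (1/(d:ℝ)) * ∑ j, (c a * w a j) ^ 2
        = c a ^ 2 * ((1/(d:ℝ)) * ∑ j, w a j ^ 2) := by
      simp_rw [mul_pow]; rw [← Finset.mul_sum]; ring
    calc Real.sqrt ((1/(d:ℝ)) * ∑ j, (c a * w a j + ∑ m ∈ T', c m * w m j) ^ 2) ≤
        Real.sqrt ((1/(d:ℝ)) * ∑ j, (c a * w a j) ^ 2) +
          Real.sqrt ((1/(d:ℝ)) * ∑ j, (∑ m ∈ T', c m * w m j) ^ 2) :=
          rms_add _ _
      _ ≤ |c a| * Real.sqrt ((1/(d:ℝ)) * ∑ j, w a j ^ 2) +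
          ∑ m ∈ T', |c m| * Real.sqrt ((1/(d:ℝ)) * ∑ j, w m j ^ 2) := by
          apply add_le_add _ ih
          rw [h, Real.sqrt_mul (sq_nonneg _), Real.sqrt_sq_eq_abs]

/-- Mean absolute deviation bound. -/
lemma mad_le {n : ℕ} (p x : Fin n → ℝ) (hp : ∀ i, 0 ≤ p i) (hs : ∑ i, p i = 1)
    (B : ℝ) (hB : ∀ i, |x i| ≤ B) :
    ∑ i, p i * |x i - ∑ m, p m * x m| ≤ B := by
  rcases Nat.eq_zero_or_pos n with hn | hn
  · subst hn; simp at hs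
  set β := ∑ m, p m * x m with hβ
  have hBnn : 0 ≤ B := le_trans (abs_nonneg _) (hB ⟨0, hn⟩)
  have habsβ : |β| ≤ B := by
    calc |β| ≤ ∑ m, |p m * x m| := Finset.abs_sum_le_sum_abs _ _
      _ ≤ ∑ m, p m * B := by
          refine Finset.sum_le_sum fun i _ => ?_
          rw [abs_mul, abs_of_nonneg (hp i)]
          exact mul_le_mul_of_nonneg_left (hB i) (hp i)
      _ = B := by rw [← Finset.sum_mul, hs, one_mul]
  have hβleB : β ≤ B := le_trans (le_abs_self _) habsβ
  have hβgeB : -B ≤ β := neg_le_of_neg_le (le_trans (neg_le_abs _) habsβ)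
  set P : Finset (Fin n) := Finset.univ.filter (fun i => β ≤ x i) with hP
  set s : ℝ := ∑ i ∈ P, p i with hsdef
  set T : ℝ := ∑ i ∈ P, p i * (x i - β) with hT
  have hsplit0 : ∑ i, p i * (x i - β) = 0 := by
    simp_rw [mul_sub]
    rw [Finset.sum_sub_distrib, ← Finset.sum_mul, hs, one_mul]
    exact sub_self β
  have hcompl : ∑ i ∈ Finset.univ.filter (fun i => ¬ β ≤ x i), p i * (β - x i) = T := by
    have := Finset.sum_filter_add_sum_filter_not Finset.univ (fun i => β ≤ x i)
      (fun i => p i * (x i - β))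
    rw [hsplit0] at this
    have h2 : ∑ i ∈ Finset.univ.filter (fun i => ¬ β ≤ x i), p i * (x i - β) = -T := by
      linarith [this]
    calc ∑ i ∈ Finset.univ.filter (fun i => ¬ β ≤ x i), p i * (β - x i)
        = -∑ i ∈ Finset.univ.filter (fun i => ¬ β ≤ x i), p i * (x i - β) := by
          rw [← Finset.sum_neg_distrib]; exact Finset.sum_congr rfl fun i _ => by ring
      _ = T := by rw [h2, neg_neg]
  have htotal : ∑ i, p i * |x i - β| = 2 * T := by
    rw [← Finset.sum_filter_add_sum_filter_not Finset.univ (fun i => β ≤ x i)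
      (fun i => p i * |x i - β|)]
    have e1 : ∑ i ∈ P, p i * |x i - β| = T := by
      refine Finset.sum_congr rfl fun i hi => ?_
      rw [abs_of_nonneg (sub_nonneg.2 (Finset.mem_filter.1 hi).2)]
    have e2 : ∑ i ∈ Finset.univ.filter (fun i => ¬ β ≤ x i), p i * |x i - β| = T := by
      rw [← hcompl]
      refine Finset.sum_congr rfl fun i hi => ?_
      have hxi : x i < β := not_le.1 (Finset.mem_filter.1 hi).2
      rw [abs_of_neg (sub_neg.2 hxi)]; ring
    rw [e1, e2]; ring
  have hs0 : 0 ≤ s := Finset.sum_nonneg fun i _ => hp i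
  have hs1 : s ≤ 1 := by
    rw [← hs]
    exact Finset.sum_le_sum_of_subset_of_nonneg (Finset.filter_subset _ _) fun i _ _ => hp i
  have hT0 : 0 ≤ T :=
    Finset.sum_nonneg fun i hi =>
      mul_nonneg (hp i) (sub_nonneg.2 (Finset.mem_filter.1 hi).2)
  have hT1 : T ≤ (B - β) * s := by
    rw [hsdef, Finset.mul_sum]
    refine Finset.sum_le_sum fun i hi => ?_
    rw [mul_comm (B - β) (p i)]
    exact mul_le_mul_of_nonneg_left
      (sub_le_sub_right (le_trans (le_abs_self _) (hB i)) β) (hp i)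
  have hT2 : T ≤ (B + β) * (1 - s) := by
    have hps : ∑ i ∈ Finset.univ.filter (fun i => ¬ β ≤ x i), p i = 1 - s := by
      have := Finset.sum_filter_add_sum_filter_not Finset.univ (fun i => β ≤ x i) p
      rw [hs] at this; linarith [this]
    rw [← hcompl, ← hps, Finset.mul_sum]
    refine Finset.sum_le_sum fun i hi => ?_
    rw [mul_comm (B + β) (p i)]
    refine mul_le_mul_of_nonneg_left ?_ (hp i)
    have : -x i ≤ B := le_trans (neg_le_abs _) (hB i)
    linarith
  rw [htotal]
  have hq : T * T ≤ ((B - β) * s) * ((B + β) * (1 - s)) :=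
    mul_le_mul hT1 hT2 hT0 (mul_nonneg (by linarith) hs0)
  nlinarith [hq, sq_nonneg (1 - 2*s), sq_nonneg β,
    mul_nonneg (mul_nonneg (sub_nonneg.2 hβleB) (by linarith : (0:ℝ) ≤ B + β)) (sq_nonneg (1 - 2*s)),
    mul_nonneg hT0 hT0, hBnn, hT0]

/-- Row RMS is at most the `∞RMS` norm. -/
lemma row_le_infRMS {l d : ℕ} (w : Matrix (Fin l) (Fin d) ℝ) (m : Fin l) :
    Real.sqrt ((1/(d:ℝ)) * ∑ j, w m j ^ 2) ≤ infRMS w := by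
  unfold infRMS
  exact le_ciSup (f := fun i => Real.sqrt ((1/(d:ℝ)) * ∑ j, w i j ^ 2))
    (Finite.bddAbove_range _) m

lemma infRMS_nonneg {l d : ℕ} (w : Matrix (Fin l) (Fin d) ℝ) : 0 ≤ infRMS w :=
  Real.iSup_nonneg fun _ => Real.sqrt_nonneg _

/-! ### The softmax coefficients and their derivative data -/

noncomputable def sM {l dQ : ℕ} (M : Matrix (Fin l) (Fin l) ℝ)
    (q k : Matrix (Fin l) (Fin dQ) ℝ) (i m : Fin l) : ℝ :=
  Real.exp ((1/(dQ:ℝ)) * ∑ s, q i s * k m s + M i m) /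
    ∑ m', Real.exp ((1/(dQ:ℝ)) * ∑ s, q i s * k m' s + M i m')

noncomputable def bM {l dQ : ℕ} (q k Δq Δk : Matrix (Fin l) (Fin dQ) ℝ) (i m : Fin l) : ℝ :=
  (1/(dQ:ℝ)) * ∑ s, (Δq i s * k m s + q i s * Δk m s)

section attn

variable {l dQ dV : ℕ} (M : Matrix (Fin l) (Fin l) ℝ)
  (q k Δq Δk : Matrix (Fin l) (Fin dQ) ℝ) (v Δv : Matrix (Fin l) (Fin dV) ℝ)

lemma attnF_entry (x : Matrix (Fin l) (Fin dQ) ℝ × Matrix (Fin l) (Fin dQ) ℝ ×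
      Matrix (Fin l) (Fin dV) ℝ) (i : Fin l) (j : Fin dV) :
    attnF M x i j = ∑ m, (Real.exp ((1 / (dQ : ℝ)) * ∑ s, x.1 i s * x.2.1 m s + M i m) /
      ∑ m', Real.exp ((1 / (dQ : ℝ)) * ∑ s, x.1 i s * x.2.1 m' s + M i m')) * x.2.2 m j := by
  simp [attnF, softmaxRows, Matrix.mul_apply, Matrix.add_apply, Matrix.smul_apply,
    Matrix.transpose_apply, smul_eq_mul]

lemma diff_pi_entry {a b : ℕ} (i : Fin a) (j : Fin b) :
    Differentiable ℝ (fun y : Matrix (Fin a) (Fin b) ℝ => y i j) := by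
  have h1 : Differentiable ℝ (fun y : Matrix (Fin a) (Fin b) ℝ => y i) :=
    differentiable_pi.mp differentiable_id i
  exact (differentiable_pi.mp differentiable_id j).comp h1

lemma attnF_diff (hl : 0 < l) :
    Differentiable ℝ (attnF (l := l) (dQ := dQ) (dV := dV) M) := by
  haveI : Nonempty (Fin l) := ⟨⟨0, hl⟩⟩
  have key : ∀ i j, Differentiable ℝ (fun x : Matrix (Fin l) (Fin dQ) ℝ ×
      Matrix (Fin l) (Fin dQ) ℝ × Matrix (Fin l) (Fin dV) ℝ => attnF M x i j) := by
    intro i j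
    simp only [attnF_entry, div_eq_mul_inv]
    apply Differentiable.fun_sum
    intro m _
    have hq : ∀ (i' : Fin l) (s : Fin dQ), Differentiable ℝ (fun x : Matrix (Fin l) (Fin dQ) ℝ ×
        Matrix (Fin l) (Fin dQ) ℝ × Matrix (Fin l) (Fin dV) ℝ => x.1 i' s) :=
      fun i' s => (diff_pi_entry i' s).comp differentiable_fst
    have hk : ∀ (i' : Fin l) (s : Fin dQ), Differentiable ℝ (fun x : Matrix (Fin l) (Fin dQ) ℝ ×
        Matrix (Fin l) (Fin dQ) ℝ × Matrix (Fin l) (Fin dV) ℝ => x.2.1 i' s) :=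
      fun i' s => (diff_pi_entry i' s).comp (differentiable_fst.comp differentiable_snd)
    have hv : ∀ (i' : Fin l) (s : Fin dV), Differentiable ℝ (fun x : Matrix (Fin l) (Fin dQ) ℝ ×
        Matrix (Fin l) (Fin dQ) ℝ × Matrix (Fin l) (Fin dV) ℝ => x.2.2 i' s) :=
      fun i' s => (diff_pi_entry i' s).comp (differentiable_snd.comp differentiable_snd)
    have hE : ∀ m' : Fin l, Differentiable ℝ
        (fun x : Matrix (Fin l) (Fin dQ) ℝ × Matrix (Fin l) (Fin dQ) ℝ ×
            Matrix (Fin l) (Fin dV) ℝ =>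
          Real.exp ((1 / (dQ : ℝ)) * ∑ s, x.1 i s * x.2.1 m' s + M i m')) :=
      fun m' =>
        (((Differentiable.fun_sum (fun s _ => (hq i s).mul (hk m' s))).const_mul _).add_const _).exp
    have hZ : Differentiable ℝ (fun x : Matrix (Fin l) (Fin dQ) ℝ ×
        Matrix (Fin l) (Fin dQ) ℝ × Matrix (Fin l) (Fin dV) ℝ =>
        ∑ m', Real.exp ((1 / (dQ : ℝ)) * ∑ s, x.1 i s * x.2.1 m' s + M i m')) :=
      Differentiable.fun_sum fun m' _ => hE m'
    have hZne : ∀ x : Matrix (Fin l) (Fin dQ) ℝ × Matrix (Fin l) (Fin dQ) ℝ ×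
        Matrix (Fin l) (Fin dV) ℝ,
        (∑ m', Real.exp ((1 / (dQ : ℝ)) * ∑ s, x.1 i s * x.2.1 m' s + M i m')) ≠ 0 :=
      fun x => ne_of_gt (Finset.sum_pos (fun m' _ => Real.exp_pos _) Finset.univ_nonempty)
    exact (((hE m).mul (hZ.inv hZne)).mul (hv m j))
  exact differentiable_pi.mpr fun i => differentiable_pi.mpr fun j => key i j

set_option maxHeartbeats 1000000 in
lemma attnF_hasDerivAt (i : Fin l) (j : Fin dV) :
    HasDerivAt (fun t : ℝ => attnF M (q + t•Δq, k + t•Δk, v + t•Δv) i j)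
      (∑ m, sM M q k i m * ((bM q k Δq Δk i m
          - ∑ m', sM M q k i m' * bM q k Δq Δk i m') * v m j + Δv m j)) 0 := by
  haveI : Nonempty (Fin l) := ⟨i⟩
  set A : Fin l → ℝ := fun m => (1/(dQ:ℝ)) * ∑ s, q i s * k m s + M i m with hA
  set E : Fin l → ℝ := fun m => Real.exp (A m) with hE
  set Z : ℝ := ∑ m', E m' with hZ
  set b : Fin l → ℝ := fun m => bM q k Δq Δk i m with hb
  set W : ℝ := ∑ m', E m' * b m' with hW
  have hZpos : 0 < Z := Finset.sum_pos (fun m' _ => Real.exp_pos _) Finset.univ_nonempty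
  have hfun : (fun t : ℝ => attnF M (q + t•Δq, k + t•Δk, v + t•Δv) i j)
      = fun t : ℝ => ∑ m,
        (Real.exp ((1/(dQ:ℝ)) * ∑ s, (q i s + t * Δq i s) * (k m s + t * Δk m s) + M i m) /
          ∑ m', Real.exp ((1/(dQ:ℝ)) * ∑ s, (q i s + t * Δq i s) * (k m' s + t * Δk m' s) + M i m')) *
        (v m j + t * Δv m j) := by
    funext t
    rw [attnF_entry]
    simp [Matrix.add_apply, Matrix.smul_apply, smul_eq_mul, mul_comm]
  rw [hfun]
  have hα : ∀ m : Fin l, HasDerivAt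
      (fun t : ℝ => (1/(dQ:ℝ)) * ∑ s, (q i s + t * Δq i s) * (k m s + t * Δk m s) + M i m)
      (b m) 0 := by
    intro m
    have hper : ∀ s : Fin dQ, HasDerivAt
        (fun t : ℝ => (q i s + t * Δq i s) * (k m s + t * Δk m s))
        (Δq i s * k m s + q i s * Δk m s) 0 := by
      intro s
      have h1 : HasDerivAt (fun t : ℝ => q i s + t * Δq i s) (Δq i s) 0 := by
        simpa using ((hasDerivAt_id (0:ℝ)).mul_const (Δq i s)).const_add (q i s)
      have h2 : HasDerivAt (fun t : ℝ => k m s + t * Δk m s) (Δk m s) 0 := by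
        simpa using ((hasDerivAt_id (0:ℝ)).mul_const (Δk m s)).const_add (k m s)
      simpa using h1.fun_mul h2
    have hsum := (HasDerivAt.fun_sum (fun s (_ : s ∈ Finset.univ) => hper s)).const_mul (1/(dQ:ℝ))
    simpa [hb, bM, Finset.mul_sum] using hsum.add_const (M i m)
  have hnum : ∀ m : Fin l, HasDerivAt
      (fun t : ℝ => Real.exp ((1/(dQ:ℝ)) * ∑ s, (q i s + t * Δq i s) * (k m s + t * Δk m s) + M i m))
      (E m * b m) 0 := by
    intro m
    have := (hα m).exp
    simpa [hE, hA] using this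
  have hden : HasDerivAt
      (fun t : ℝ => ∑ m', Real.exp ((1/(dQ:ℝ)) * ∑ s, (q i s + t * Δq i s) * (k m' s + t * Δk m' s) + M i m'))
      W 0 := HasDerivAt.fun_sum (fun m' _ => hnum m')
  have hquot : ∀ m : Fin l, HasDerivAt
      (fun t : ℝ => Real.exp ((1/(dQ:ℝ)) * ∑ s, (q i s + t * Δq i s) * (k m s + t * Δk m s) + M i m) /
        ∑ m', Real.exp ((1/(dQ:ℝ)) * ∑ s, (q i s + t * Δq i s) * (k m' s + t * Δk m' s) + M i m'))
      ((E m * b m * Z - E m * W) / Z ^ 2) 0 := by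
    intro m
    have h := (hnum m).fun_div hden
      (ne_of_gt (Finset.sum_pos (fun m' _ => Real.exp_pos _) Finset.univ_nonempty))
    refine h.congr_deriv ?_
    simp [hA, hE, hZ]
  have haff : ∀ m : Fin l, HasDerivAt (fun t : ℝ => v m j + t * Δv m j) (Δv m j) 0 := by
    intro m
    simpa using ((hasDerivAt_id (0:ℝ)).mul_const (Δv m j)).const_add (v m j)
  have hprod : ∀ m : Fin l, HasDerivAt
      (fun t : ℝ => (Real.exp ((1/(dQ:ℝ)) * ∑ s, (q i s + t * Δq i s) * (k m s + t * Δk m s) + M i m) /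
        ∑ m', Real.exp ((1/(dQ:ℝ)) * ∑ s, (q i s + t * Δq i s) * (k m' s + t * Δk m' s) + M i m')) *
        (v m j + t * Δv m j))
      ((E m * b m * Z - E m * W) / Z ^ 2 * v m j + E m / Z * Δv m j) 0 := by
    intro m
    have h := (hquot m).fun_mul (haff m)
    refine h.congr_deriv ?_
    simp [hA, hE, hZ]
  have htot := HasDerivAt.fun_sum (fun m (_ : m ∈ Finset.univ) => hprod m)
  refine htot.congr_deriv ?_
  refine Finset.sum_congr rfl fun m _ => ?_
  have hSm : sM M q k i m = E m / Z := rfl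
  have hβ : (∑ m', sM M q k i m' * bM q k Δq Δk i m') = W / Z := by
    rw [hW, Finset.sum_div]
    refine Finset.sum_congr rfl fun m' _ => ?_
    show E m' / Z * b m' = E m' * b m' / Z
    rw [div_mul_eq_mul_div]
  rw [hSm, hβ]
  field_simp
  ring

set_option maxHeartbeats 1000000 in
lemma attnF_fderiv_entry (hl : 0 < l) (i : Fin l) (j : Fin dV) :
    fderiv ℝ (attnF M) (q, k, v) (Δq, Δk, Δv) i j
      = ∑ m, sM M q k i m * ((bM q k Δq Δk i m
          - ∑ m', sM M q k i m' * bM q k Δq Δk i m') * v m j + Δv m j) := by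
  have hF := ((attnF_diff M hl) (q, k, v)).hasFDerivAt
  have hline : HasDerivAt (fun t : ℝ => ((q, k, v) : Matrix (Fin l) (Fin dQ) ℝ ×
      Matrix (Fin l) (Fin dQ) ℝ × Matrix (Fin l) (Fin dV) ℝ) + t • (Δq, Δk, Δv))
      (Δq, Δk, Δv) 0 := by
    exact (((hasDerivAt_id (0:ℝ)).smul_const
      (((Δq, Δk, Δv)) : Matrix (Fin l) (Fin dQ) ℝ ×
        Matrix (Fin l) (Fin dQ) ℝ × Matrix (Fin l) (Fin dV) ℝ)).const_add (q, k, v)).congr_deriv (one_smul _ _)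
  have hF' : HasFDerivAt (attnF M) (fderiv ℝ (attnF M) (q, k, v))
      (((q, k, v) : Matrix (Fin l) (Fin dQ) ℝ × Matrix (Fin l) (Fin dQ) ℝ ×
        Matrix (Fin l) (Fin dV) ℝ) + (0:ℝ) • (Δq, Δk, Δv)) := by simpa using hF
  have hcomp := hF'.comp_hasDerivAt 0 hline
  have hentry : HasDerivAt (fun t : ℝ => attnF M ((q, k, v) + t • (Δq, Δk, Δv)) i j)
      (fderiv ℝ (attnF M) (q, k, v) (Δq, Δk, Δv) i j) 0 :=
    hasDerivAt_pi.mp (hasDerivAt_pi.mp hcomp i) j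
  exact hentry.unique (attnF_hasDerivAt M q k Δq Δk v Δv i j)

end attn

/-- Arithmetic endgame. -/
lemma final_arith (V Qn Kn dQn dKn dVn : ℝ) (hV : 0 ≤ V) (hQ : 0 ≤ Qn) (hK : 0 ≤ Kn)
    (hdq : 0 ≤ dQn) (hdk : 0 ≤ dKn) (hdv : 0 ≤ dVn) :
    (dQn * Kn + Qn * dKn) * V + dVn ≤ max 1 (V * max Qn Kn) * (dQn + dKn + dVn) := by
  have h1 : Kn ≤ max Qn Kn := le_max_right _ _
  have h2 : Qn ≤ max Qn Kn := le_max_left _ _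
  have h3 : (1:ℝ) ≤ max 1 (V * max Qn Kn) := le_max_left _ _
  have h4 : V * max Qn Kn ≤ max 1 (V * max Qn Kn) := le_max_right _ _
  have a1 : Kn * V ≤ max Qn Kn * V := mul_le_mul_of_nonneg_right h1 hV
  have a2 : Qn * V ≤ max Qn Kn * V := mul_le_mul_of_nonneg_right h2 hV
  nlinarith [mul_nonneg hdq (sub_nonneg.2 a1), mul_nonneg hdk (sub_nonneg.2 a2),
    mul_nonneg hdq (sub_nonneg.2 (le_trans (le_of_eq (mul_comm _ _)) h4)),
    mul_nonneg hdk (sub_nonneg.2 (le_trans (le_of_eq (mul_comm _ _)) h4)),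
    mul_nonneg hdv (sub_nonneg.2 h3)]

theorem functional_attention_lipschitz_bound
    (l dQ dV : ℕ) (hl : 0 < l) (hdQ : 0 < dQ) (hdV : 0 < dV)
    (M : Matrix (Fin l) (Fin l) ℝ) :
    Differentiable ℝ (attnF (l := l) (dQ := dQ) (dV := dV) M) ∧
    ∀ (q k : Matrix (Fin l) (Fin dQ) ℝ) (v : Matrix (Fin l) (Fin dV) ℝ)
      (Δq Δk : Matrix (Fin l) (Fin dQ) ℝ) (Δv : Matrix (Fin l) (Fin dV) ℝ),
      infRMS (fderiv ℝ (attnF M) (q, k, v) (Δq, Δk, Δv)) ≤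
        max 1 (infRMS v * max (infRMS q) (infRMS k)) *
          (infRMS Δq + infRMS Δk + infRMS Δv) := by
  refine ⟨attnF_diff M hl, ?_⟩
  intro q k v Δq Δk Δv
  haveI : Nonempty (Fin l) := ⟨⟨0, hl⟩⟩
  set B : ℝ := infRMS Δq * infRMS k + infRMS q * infRMS Δk with hBdef
  unfold infRMS
  apply ciSup_le
  intro i
  set β : ℝ := ∑ m', sM M q k i m' * bM q k Δq Δk i m' with hβdef
  have hSnn : ∀ m, 0 ≤ sM M q k i m := fun m =>
    div_nonneg (Real.exp_pos _).le (Finset.sum_nonneg fun _ _ => (Real.exp_pos _).le)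
  have hSsum : ∑ m, sM M q k i m = 1 := by
    unfold sM
    rw [← Finset.sum_div]
    exact div_self (ne_of_gt (Finset.sum_pos (fun m' _ => Real.exp_pos _) Finset.univ_nonempty))
  have hbB : ∀ m, |bM q k Δq Δk i m| ≤ B := by
    intro m
    have hsplit : bM q k Δq Δk i m
        = (1/(dQ:ℝ)) * ∑ s, Δq i s * k m s + (1/(dQ:ℝ)) * ∑ s, q i s * Δk m s := by
      unfold bM
      rw [Finset.sum_add_distrib]; ring
    rw [hsplit]
    have h0 : (0:ℝ) ≤ 1/(dQ:ℝ) := by positivity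
    calc |(1/(dQ:ℝ)) * ∑ s, Δq i s * k m s + (1/(dQ:ℝ)) * ∑ s, q i s * Δk m s|
        ≤ (1/(dQ:ℝ)) * |∑ s, Δq i s * k m s| + (1/(dQ:ℝ)) * |∑ s, q i s * Δk m s| := by
          calc _ ≤ |(1/(dQ:ℝ)) * ∑ s, Δq i s * k m s| + |(1/(dQ:ℝ)) * ∑ s, q i s * Δk m s| :=
                abs_add_le _ _
            _ = _ := by rw [abs_mul, abs_mul, abs_of_nonneg h0]
      _ ≤ Real.sqrt ((1/(dQ:ℝ)) * ∑ s, Δq i s ^ 2) * Real.sqrt ((1/(dQ:ℝ)) * ∑ s, k m s ^ 2)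
          + Real.sqrt ((1/(dQ:ℝ)) * ∑ s, q i s ^ 2) * Real.sqrt ((1/(dQ:ℝ)) * ∑ s, Δk m s ^ 2) :=
          add_le_add (cs_rms _ _) (cs_rms _ _)
      _ ≤ infRMS Δq * infRMS k + infRMS q * infRMS Δk := by
          refine add_le_add (mul_le_mul (row_le_infRMS Δq i) (row_le_infRMS k m)
              (Real.sqrt_nonneg _) (infRMS_nonneg _))
            (mul_le_mul (row_le_infRMS q i) (row_le_infRMS Δk m)
              (Real.sqrt_nonneg _) (infRMS_nonneg _))
  set c1 : Fin l → ℝ := fun m => sM M q k i m * (bM q k Δq Δk i m - β) with hc1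
  set c2 : Fin l → ℝ := fun m => sM M q k i m with hc2
  have hrow : ∀ j, fderiv ℝ (attnF M) (q, k, v) (Δq, Δk, Δv) i j
      = (∑ m, c1 m * v m j) + (∑ m, c2 m * Δv m j) := by
    intro j
    rw [attnF_fderiv_entry M q k Δq Δk v Δv hl i j, ← hβdef, ← Finset.sum_add_distrib]
    exact Finset.sum_congr rfl fun m _ => by rw [hc1, hc2]; ring
  calc Real.sqrt ((1/(dV:ℝ)) * ∑ j, fderiv ℝ (attnF M) (q, k, v) (Δq, Δk, Δv) i j ^ 2)
      = Real.sqrt ((1/(dV:ℝ)) * ∑ j, ((∑ m, c1 m * v m j) + (∑ m, c2 m * Δv m j)) ^ 2) := by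
        congr 2
        exact Finset.sum_congr rfl fun j _ => by rw [hrow j]
    _ ≤ Real.sqrt ((1/(dV:ℝ)) * ∑ j, (∑ m, c1 m * v m j) ^ 2)
        + Real.sqrt ((1/(dV:ℝ)) * ∑ j, (∑ m, c2 m * Δv m j) ^ 2) := rms_add _ _
    _ ≤ (∑ m, |c1 m| * Real.sqrt ((1/(dV:ℝ)) * ∑ j, v m j ^ 2))
        + (∑ m, |c2 m| * Real.sqrt ((1/(dV:ℝ)) * ∑ j, Δv m j ^ 2)) :=
        add_le_add (rms_lin c1 (fun m j => v m j) Finset.univ)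
          (rms_lin c2 (fun m j => Δv m j) Finset.univ)
    _ ≤ (∑ m, |c1 m|) * infRMS v + (∑ m, |c2 m|) * infRMS Δv := by
        rw [Finset.sum_mul, Finset.sum_mul]
        refine add_le_add (Finset.sum_le_sum fun m _ => ?_) (Finset.sum_le_sum fun m _ => ?_)
        · exact mul_le_mul_of_nonneg_left (row_le_infRMS v m) (abs_nonneg _)
        · exact mul_le_mul_of_nonneg_left (row_le_infRMS Δv m) (abs_nonneg _)
    _ ≤ B * infRMS v + 1 * infRMS Δv := by
        refine add_le_add (mul_le_mul_of_nonneg_right ?_ (infRMS_nonneg v))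
          (mul_le_mul_of_nonneg_right ?_ (infRMS_nonneg Δv))
        · have : ∑ m, |c1 m| = ∑ m, sM M q k i m * |bM q k Δq Δk i m - β| := by
            refine Finset.sum_congr rfl fun m _ => ?_
            rw [hc1, abs_mul, abs_of_nonneg (hSnn m)]
          rw [this, hβdef]
          exact mad_le (sM M q k i) (bM q k Δq Δk i) hSnn hSsum B hbB
        · have : ∑ m, |c2 m| = ∑ m, sM M q k i m := by
            refine Finset.sum_congr rfl fun m _ => ?_
            rw [hc2, abs_of_nonneg (hSnn m)]
          rw [this, hSsum]
    _ ≤ max 1 (infRMS v * max (infRMS q) (infRMS k)) *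
          (infRMS Δq + infRMS Δk + infRMS Δv) := by
        rw [hBdef, one_mul]
        have := final_arith (infRMS v) (infRMS q) (infRMS k)
          (infRMS Δq) (infRMS Δk) (infRMS Δv) (infRMS_nonneg _) (infRMS_nonneg _)
          (infRMS_nonneg _) (infRMS_nonneg _) (infRMS_nonneg _) (infRMS_nonneg _)
        linarith [this]
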